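/- For any ring R, any A ∈ M_n(R), and any invertible matrix T ∈ GL_n(Z(R)) with entries in the center Z(R) of R, the preadjoint satisfies (T⁻¹AT)* = T⁻¹ A* T. -/

import Mathlib

open Matrix Polynomial

/-- The symmetric determinant of a square matrix over a possibly noncommutative ring:
`sdet A = Σ_{α,β ∈ S_n} sgn α · sgn β · a_{α 1, β 1} ⋯ a_{α n, β n}` (ordered product). -/
def sdet {R : Type*} [Ring R] {n : ℕ} (A : Matrix (Fin n) (Fin n) R) : R :=
  ∑ α : Equiv.Perm (Fin n), ∑ β : Equiv.Perm (Fin n),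
    ((Equiv.Perm.sign α : ℤ) * (Equiv.Perm.sign β : ℤ)) •
      (List.ofFn fun i : Fin n => A (α i) (β i)).prod

/-- The preadjoint matrix `A*`: its `(r,s)` entry is the sum over `α, β ∈ S_n`
with `α s = s` and `β s = r` of `sgn α · sgn β` times the ordered product of the
entries `a_{α i, β i}` for `i ≠ s`. -/
def preadj {R : Type*} [Ring R] {n : ℕ} (A : Matrix (Fin n) (Fin n) R) :
    Matrix (Fin n) (Fin n) R :=
  fun r s =>
    ∑ α ∈ Finset.univ.filter (fun α : Equiv.Perm (Fin n) => α s = s),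
      ∑ β ∈ Finset.univ.filter (fun β : Equiv.Perm (Fin n) => β s = r),
        ((Equiv.Perm.sign α : ℤ) * (Equiv.Perm.sign β : ℤ)) •
          (((List.finRange n).filter (fun i => i ≠ s)).map fun i => A (α i) (β i)).prod

namespace PreadjAux
variable {R : Type*} [Ring R]



lemma ccomm {a : R} (ha : a ∈ Set.center R) (b : R) : a * b = b * a :=
  ((Semigroup.mem_center_iff.mp ha) b).symm

lemma listProd_central {k : ℕ} {f : Fin k → R} (hf : ∀ i, f i ∈ Set.center R) :
    (List.ofFn f).prod ∈ Set.center R := by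
  induction k with
  | zero => simp only [List.ofFn_zero, List.prod_nil]; exact Set.one_mem_center
  | succ k ih =>
    rw [List.ofFn_succ, List.prod_cons]
    exact Set.mul_mem_center (hf 0) (ih fun i => hf i.succ)

lemma swap4 {a b c d : R} (hb : b ∈ Set.center R) (hc : c ∈ Set.center R) :
    a * b * (c * d) = b * c * (a * d) := by
  rw [← ccomm hb a, mul_assoc b a (c * d), ← mul_assoc a c d, ← ccomm hc a,
    mul_assoc c a d, ← mul_assoc b c _]

lemma prod_mul_left {k : ℕ} (u b : Fin k → R) (hu : ∀ i, u i ∈ Set.center R) :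
    (List.ofFn fun i => u i * b i).prod = (List.ofFn u).prod * (List.ofFn b).prod := by
  induction k with
  | zero => simp
  | succ k ih =>
    simp only [List.ofFn_succ, List.prod_cons]
    rw [ih (fun i => u i.succ) (fun i => b i.succ) (fun i => hu i.succ)]
    rw [mul_assoc (u 0), mul_assoc (u 0), ← mul_assoc (b 0),
      ← ccomm (listProd_central fun i => hu i.succ) (b 0), mul_assoc]

lemma prod_mul_right {k : ℕ} (b v : Fin k → R) (hv : ∀ i, v i ∈ Set.center R) :
    (List.ofFn fun i => b i * v i).prod = (List.ofFn v).prod * (List.ofFn b).prod := by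
  induction k with
  | zero => simp
  | succ k ih =>
    simp only [List.ofFn_succ, List.prod_cons]
    rw [ih (fun i => b i.succ) (fun i => v i.succ) (fun i => hv i.succ)]
    exact swap4 (hv 0) (listProd_central fun i => hv i.succ)

lemma prod_mul_central {k : ℕ} (u b v : Fin k → R) (hu : ∀ i, u i ∈ Set.center R)
    (hv : ∀ i, v i ∈ Set.center R) :
    (List.ofFn fun i => u i * b i * v i).prod
      = (List.ofFn u).prod * ((List.ofFn v).prod * (List.ofFn b).prod) := by
  have : (List.ofFn fun i => u i * b i * v i) = List.ofFn fun i => u i * (b i * v i) := by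
    simp [mul_assoc]
  rw [this, prod_mul_left u (fun i => b i * v i) hu, prod_mul_right b v hv]

lemma prod_expand {k : ℕ} {κ : Type*} [Fintype κ] (g : Fin k → κ → R) :
    (List.ofFn fun i => ∑ x : κ, g i x).prod
      = ∑ p : Fin k → κ, (List.ofFn fun i => g i (p i)).prod := by
  induction k with
  | zero =>
    simp only [List.ofFn_zero, List.prod_nil]
    have : ∀ p : Fin 0 → κ, p = fun i => i.elim0 := fun p => Subsingleton.elim _ _
    simp
  | succ k ih =>
    rw [List.ofFn_succ, List.prod_cons, ih fun i => g i.succ, Finset.sum_mul_sum]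
    rw [← (Fin.consEquiv fun _ => κ).sum_comp
      (fun p => (List.ofFn fun i => g i (p i)).prod)]
    rw [Fintype.sum_prod_type]
    refine Finset.sum_congr rfl fun x _ => Finset.sum_congr rfl fun p _ => ?_
    rw [List.ofFn_succ, List.prod_cons]
    simp [Fin.consEquiv]



lemma filter_finRange {m : ℕ} (s : Fin (m + 1)) :
    (List.finRange (m + 1)).filter (fun i => i ≠ s) = List.ofFn s.succAbove := by
  induction m with
  | zero =>
    fin_cases s
    decide
  | succ m ih =>
    rcases Fin.eq_zero_or_eq_succ s with rfl | ⟨t, rfl⟩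
    · rw [List.finRange_succ, Fin.succAbove_zero, List.ofFn_eq_map]
      simp [List.filter_map, Fin.succ_ne_zero, List.filter_eq_self.mpr]
    · rw [List.finRange_succ, List.filter_cons,
        if_pos (by simp [(Fin.succ_ne_zero t).symm]), List.filter_map]
      have h1 : ((fun i : Fin (m+2) => decide (i ≠ t.succ)) ∘ Fin.succ)
          = fun i => decide (i ≠ t) := by
        funext i; simp [Fin.succ_inj]
      rw [h1, ih t, List.ofFn_succ, List.map_ofFn, Fin.succ_succAbove_zero]
      exact congrArg (0 :: ·) (congrArg List.ofFn (funext fun j =>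
        (Fin.succ_succAbove_succ t j).symm))

lemma prod_ite_central {R : Type*} [Ring R] {m : ℕ} (i₀ : Fin (m + 1)) (f : Fin (m + 1) → R)
    (c : R) (hc : c ∈ Set.center R) :
    (List.ofFn fun i => if i = i₀ then c else f i).prod
      = c * (List.ofFn fun j : Fin m => f (i₀.succAbove j)).prod := by
  induction m with
  | zero =>
    fin_cases i₀
    simp
  | succ m ih =>
    rcases Fin.eq_zero_or_eq_succ i₀ with rfl | ⟨t, rfl⟩
    · rw [List.ofFn_succ, List.prod_cons, if_pos rfl]
      simp only [Fin.succAbove_zero]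
      have h0 : (fun i : Fin (m+1) => if i.succ = 0 then c else f i.succ)
          = fun i => f i.succ := funext fun i => if_neg (Fin.succ_ne_zero i)
      rw [h0]
    · rw [List.ofFn_succ, List.prod_cons, if_neg (Fin.succ_ne_zero t).symm]
      have h1 : (fun i : Fin (m+1) => if i.succ = t.succ then c else f i.succ)
          = fun i => if i = t then c else f i.succ := by
        funext i; simp [Fin.succ_inj]
      rw [h1, ih t (fun i => f i.succ)]
      simp only [List.ofFn_succ (f := fun j : Fin (m+1) => f (t.succ.succAbove j)),
        Fin.succ_succAbove_zero, Fin.succ_succAbove_succ, List.prod_cons]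
      rw [← mul_assoc, ← mul_assoc, Semigroup.mem_center_iff.mp hc (f 0)]



def sdetAux {n : ℕ} (C : Fin n → Matrix (Fin n) (Fin n) R) : R :=
  ∑ α : Equiv.Perm (Fin n), ∑ β : Equiv.Perm (Fin n),
    ((Equiv.Perm.sign α : ℤ) * (Equiv.Perm.sign β : ℤ)) •
      (List.ofFn fun i => C i (α i) (β i)).prod

lemma preadj_apply' {m : ℕ} (B : Matrix (Fin (m+1)) (Fin (m+1)) R) (v u : Fin (m+1)) :
    preadj B v u
      = ∑ α ∈ Finset.univ.filter (fun α : Equiv.Perm (Fin (m+1)) => α u = u),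
          ∑ β ∈ Finset.univ.filter (fun β : Equiv.Perm (Fin (m+1)) => β u = v),
            ((Equiv.Perm.sign α : ℤ) * (Equiv.Perm.sign β : ℤ)) •
              (List.ofFn fun j : Fin m => B (α (u.succAbove j)) (β (u.succAbove j))).prod := by
  unfold preadj
  refine Finset.sum_congr rfl fun α _ => Finset.sum_congr rfl fun β _ => ?_
  rw [filter_finRange, List.map_ofFn]
  rfl

lemma sign_mul_cancel (α β c : Equiv.Perm (Fin n)) :
    ((Equiv.Perm.sign (α * c) : ℤ) * (Equiv.Perm.sign (β * c) : ℤ))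
      = (Equiv.Perm.sign α : ℤ) * (Equiv.Perm.sign β : ℤ) := by
  simp only [Equiv.Perm.sign_mul, Units.val_mul]
  rcases Int.units_eq_one_or (Equiv.Perm.sign c) with h | h <;> rw [h] <;> push_cast <;> ring

lemma lemmaD {m : ℕ} (i₀ : Fin (m+1)) (B M : Matrix (Fin (m+1)) (Fin (m+1)) R)
    (hM : ∀ u v, M u v ∈ Set.center R) :
    sdetAux (fun i => if i = i₀ then M else B) = ∑ u, ∑ v, M u v * preadj B v u := by
  -- rewrite RHS
  have hRHS : ∀ u, ∑ v, M u v * preadj B v u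
      = ∑ α ∈ Finset.univ.filter (fun α : Equiv.Perm (Fin (m+1)) => α u = u),
          ∑ β : Equiv.Perm (Fin (m+1)),
            ((Equiv.Perm.sign α : ℤ) * (Equiv.Perm.sign β : ℤ)) •
              (M u (β u) *
                (List.ofFn fun j : Fin m => B (α (u.succAbove j)) (β (u.succAbove j))).prod) := by
    intro u
    have : ∀ v, M u v * preadj B v u
        = ∑ α ∈ Finset.univ.filter (fun α : Equiv.Perm (Fin (m+1)) => α u = u),
            ∑ β ∈ Finset.univ.filter (fun β : Equiv.Perm (Fin (m+1)) => β u = v),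
              ((Equiv.Perm.sign α : ℤ) * (Equiv.Perm.sign β : ℤ)) •
                (M u (β u) *
                  (List.ofFn fun j : Fin m => B (α (u.succAbove j)) (β (u.succAbove j))).prod) := by
      intro v
      rw [preadj_apply', Finset.mul_sum]
      refine Finset.sum_congr rfl fun α _ => ?_
      rw [Finset.mul_sum]
      refine Finset.sum_congr rfl fun β hβ => ?_
      rw [Finset.mem_filter] at hβ
      rw [hβ.2, mul_smul_comm]
    simp_rw [this]
    rw [Finset.sum_comm]
    refine Finset.sum_congr rfl fun α _ => ?_
    exact Finset.sum_fiberwise Finset.univ (fun β : Equiv.Perm (Fin (m+1)) => β u) _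
  -- rewrite LHS
  have hL1 : sdetAux (fun i => if i = i₀ then M else B)
      = ∑ α : Equiv.Perm (Fin (m+1)), ∑ β : Equiv.Perm (Fin (m+1)),
          ((Equiv.Perm.sign α : ℤ) * (Equiv.Perm.sign β : ℤ)) •
            (M (α i₀) (β i₀) *
              (List.ofFn fun j : Fin m => B (α (i₀.succAbove j)) (β (i₀.succAbove j))).prod) := by
    unfold sdetAux
    refine Finset.sum_congr rfl fun α _ => Finset.sum_congr rfl fun β _ => ?_
    congr 1
    have h1 : (fun i => (if i = i₀ then M else B) (α i) (β i))
        = fun i => if i = i₀ then M (α i₀) (β i₀) else B (α i) (β i) := by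
      funext i
      by_cases h : i = i₀
      · subst h; simp
      · simp [h]
    rw [h1, prod_ite_central i₀ _ _ (hM _ _)]
  rw [hL1, ← Finset.sum_fiberwise Finset.univ (fun α : Equiv.Perm (Fin (m+1)) => α i₀)
    (fun α => ∑ β : Equiv.Perm (Fin (m+1)),
      ((Equiv.Perm.sign α : ℤ) * (Equiv.Perm.sign β : ℤ)) •
        (M (α i₀) (β i₀) *
          (List.ofFn fun j : Fin m => B (α (i₀.succAbove j)) (β (i₀.succAbove j))).prod))]
  refine Finset.sum_congr rfl fun u _ => ?_
  rw [hRHS u]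
  -- the cycle
  set c : Equiv.Perm (Fin (m+1)) := (Fin.cycleRange i₀)⁻¹ * (Fin.cycleRange u) with hc
  have hcu : c u = i₀ := by
    rw [hc, Equiv.Perm.mul_apply, Fin.cycleRange_self, ← Fin.cycleRange_self i₀,
      Equiv.Perm.inv_def, Equiv.symm_apply_apply]
  have hcs : ∀ j : Fin m, c (u.succAbove j) = i₀.succAbove j := by
    intro j
    rw [hc, Equiv.Perm.mul_apply, Fin.cycleRange_succAbove, ← Fin.cycleRange_succAbove i₀,
      Equiv.Perm.inv_def, Equiv.symm_apply_apply]
  have hcinv : c⁻¹ i₀ = u := Equiv.Perm.inv_eq_iff_eq.mpr hcu.symm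
  refine Finset.sum_nbij' (fun α => α * c) (fun α => α * c⁻¹) ?_ ?_ ?_ ?_ ?_
  · intro α hα
    rw [Finset.mem_filter] at hα ⊢
    exact ⟨Finset.mem_univ _, by rw [show (α * c) u = α (c u) from rfl, hcu, hα.2]⟩
  · intro α hα
    rw [Finset.mem_filter] at hα ⊢
    exact ⟨Finset.mem_univ _, by rw [show (α * c⁻¹) i₀ = α (c⁻¹ i₀) from rfl, hcinv, hα.2]⟩
  · intro α _; show α * c * c⁻¹ = α; rw [mul_assoc, mul_inv_cancel, mul_one]
  · intro α _; show α * c⁻¹ * c = α; rw [mul_assoc, inv_mul_cancel, mul_one]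
  · intro α hα
    rw [Finset.mem_filter] at hα
    refine Fintype.sum_equiv (Equiv.mulRight c) _ _ fun β => ?_
    simp only [Equiv.coe_mulRight]
    rw [sign_mul_cancel α β c]
    have e1 : (β * c) u = β i₀ := by
      rw [show (β * c) u = β (c u) from rfl, hcu]
    have e2 : (fun j : Fin m => B ((α * c) (u.succAbove j)) ((β * c) (u.succAbove j)))
        = fun j => B (α (i₀.succAbove j)) (β (i₀.succAbove j)) := by
      funext j
      rw [show (α * c) (u.succAbove j) = α (c (u.succAbove j)) from rfl,
        show (β * c) (u.succAbove j) = β (c (u.succAbove j)) from rfl, hcs]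
    rw [e1, e2, hα.2]




lemma center_coe (x : Subring.center R) : (x : R) ∈ Set.center R :=
  Semigroup.mem_center_iff.mpr fun g => Subring.mem_center_iff.mp x.2 g

lemma coe_prod {k : ℕ} (f : Fin k → Subring.center R) :
    (List.ofFn fun i => (f i : R)).prod = ((∏ i, f i : Subring.center R) : R) := by
  have h1 : (List.ofFn fun i => (f i : R)) = (List.ofFn f).map (Subring.center R).subtype := by
    rw [List.map_ofFn]; rfl
  rw [h1, List.prod_hom, List.prod_ofFn]; rfl

lemma sum_fun_perm {n : ℕ} {M : Type*} [AddCommMonoid M] (f : (Fin n → Fin n) → M)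
    (hf : ∀ p, ¬Function.Injective p → f p = 0) :
    ∑ p : Fin n → Fin n, f p = ∑ σ : Equiv.Perm (Fin n), f ⇑σ := by
  have himg : ∑ p ∈ Finset.univ.image (fun σ : Equiv.Perm (Fin n) => ⇑σ), f p
      = ∑ σ : Equiv.Perm (Fin n), f ⇑σ :=
    Finset.sum_image (fun σ _ τ _ h => Equiv.coe_fn_injective h)
  rw [← himg]
  refine (Finset.sum_subset (Finset.subset_univ _) fun p _ hp => hf p fun hinj => hp ?_).symm
  exact Finset.mem_image.mpr
    ⟨Equiv.ofBijective p (Finite.injective_iff_bijective.mp hinj), Finset.mem_univ _, rfl⟩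

lemma hdS {n : ℕ} (S₀ : Matrix (Fin n) (Fin n) (Subring.center R)) (p : Fin n → Fin n) :
    ∑ α : Equiv.Perm (Fin n), (Equiv.Perm.sign α : ℤ) •
        (List.ofFn fun i => ((S₀ (α i) (p i) : R))).prod
      = (((S₀.submatrix id p).det : Subring.center R) : R) := by
  have h2 : ∀ α : Equiv.Perm (Fin n), (List.ofFn fun i => ((S₀ (α i) (p i) : R))).prod
      = ((∏ i, S₀ (α i) (p i) : Subring.center R) : R) :=
    fun α => coe_prod fun i => S₀ (α i) (p i)
  simp only [h2, Matrix.det_apply, Matrix.submatrix_apply, id_eq]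
  simp only [Units.smul_def, AddSubmonoidClass.coe_finset_sum, AddSubgroupClass.coe_zsmul]


lemma hdT {n : ℕ} (T₀ : Matrix (Fin n) (Fin n) (Subring.center R)) (q : Fin n → Fin n) :
    ∑ β : Equiv.Perm (Fin n), (Equiv.Perm.sign β : ℤ) •
        (List.ofFn fun i => ((T₀ (q i) (β i) : R))).prod
      = (((T₀.submatrix q id).det : Subring.center R) : R) := by
  have h2 : ∀ β : Equiv.Perm (Fin n), (List.ofFn fun i => ((T₀ (q i) (β i) : R))).prod
      = ((∏ i, T₀ (q i) (β i) : Subring.center R) : R) :=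
    fun β => coe_prod fun i => T₀ (q i) (β i)
  rw [← Matrix.det_transpose (T₀.submatrix q id)]
  simp only [h2, Matrix.det_apply, Matrix.transpose_apply, Matrix.submatrix_apply, id_eq,
    Units.smul_def, AddSubmonoidClass.coe_finset_sum, AddSubgroupClass.coe_zsmul]


lemma triple_swap {ι κ γ M : Type*} [Fintype ι] [Fintype κ] [Fintype γ] [AddCommMonoid M]
    (X : ι → κ → γ → M) :
    ∑ a : ι, ∑ b : κ, ∑ g : γ, X a b g = ∑ g : γ, ∑ a : ι, ∑ b : κ, X a b g := by
  rw [show (∑ a : ι, ∑ b : κ, ∑ g : γ, X a b g) = ∑ a : ι, ∑ g : γ, ∑ b : κ, X a b g from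
    Finset.sum_congr rfl fun a _ => Finset.sum_comm]
  exact Finset.sum_comm

lemma factor_sum {n : ℕ} (xs ys : Equiv.Perm (Fin n) → R) (z : R) :
    ∑ α : Equiv.Perm (Fin n), ∑ β : Equiv.Perm (Fin n),
        ((Equiv.Perm.sign α : ℤ) * (Equiv.Perm.sign β : ℤ)) • (xs α * (ys β * z))
      = (∑ α : Equiv.Perm (Fin n), (Equiv.Perm.sign α : ℤ) • xs α) *
          ((∑ β : Equiv.Perm (Fin n), (Equiv.Perm.sign β : ℤ) • ys β) * z) := by
  rw [Finset.sum_mul]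
  refine Finset.sum_congr rfl fun α _ => ?_
  rw [smul_mul_assoc, Finset.sum_mul, Finset.mul_sum, Finset.smul_sum]
  refine Finset.sum_congr rfl fun β _ => ?_
  rw [smul_mul_assoc, mul_smul_comm, smul_smul]

lemma lemmaCB {n : ℕ} (S₀ T₀ : Matrix (Fin n) (Fin n) (Subring.center R))
    (Bf : Fin n → Matrix (Fin n) (Fin n) R) :
    sdetAux (fun i => S₀.map (Subring.center R).subtype * Bf i
        * T₀.map (Subring.center R).subtype)
      = ((S₀.det * T₀.det : Subring.center R) : R) * sdetAux Bf := by
  set S : Matrix (Fin n) (Fin n) R := S₀.map (Subring.center R).subtype with hSdef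
  set T : Matrix (Fin n) (Fin n) R := T₀.map (Subring.center R).subtype with hTdef
  have hSc : ∀ x y, S x y ∈ Set.center R := fun x y => center_coe _
  have hTc : ∀ x y, T x y ∈ Set.center R := fun x y => center_coe _
  have hentry : ∀ (Bm : Matrix (Fin n) (Fin n) R) (x y : Fin n),
      (S * Bm * T) x y = ∑ g : Fin n × Fin n, S x g.1 * Bm g.1 g.2 * T g.2 y := by
    intro Bm x y
    rw [Fintype.sum_prod_type]
    simp only [Matrix.mul_apply, Finset.sum_mul]
    exact Finset.sum_comm
  have hBig : ∀ α β : Equiv.Perm (Fin n),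
      (List.ofFn fun i => (S * Bf i * T) (α i) (β i)).prod
        = ∑ G : Fin n → Fin n × Fin n,
            (List.ofFn fun i => S (α i) (G i).1).prod *
              ((List.ofFn fun i => T (G i).2 (β i)).prod *
                (List.ofFn fun i => Bf i (G i).1 (G i).2).prod) := by
    intro α β
    have h1 : (fun i => (S * Bf i * T) (α i) (β i))
        = fun i => ∑ g : Fin n × Fin n, S (α i) g.1 * Bf i g.1 g.2 * T g.2 (β i) := by
      funext i; exact hentry (Bf i) (α i) (β i)
    rw [h1, prod_expand]
    exact Finset.sum_congr rfl fun G _ =>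
      prod_mul_central _ _ _ (fun i => hSc _ _) (fun i => hTc _ _)
  unfold sdetAux
  simp only [hBig, Finset.smul_sum]
  refine (triple_swap _).trans ?_
  have hfac : ∀ G : Fin n → Fin n × Fin n,
      ∑ α : Equiv.Perm (Fin n), ∑ β : Equiv.Perm (Fin n),
          ((Equiv.Perm.sign α : ℤ) * (Equiv.Perm.sign β : ℤ)) •
            ((List.ofFn fun i => S (α i) (G i).1).prod *
              ((List.ofFn fun i => T (G i).2 (β i)).prod *
                (List.ofFn fun i => Bf i (G i).1 (G i).2).prod))
        = (((S₀.submatrix id fun i => (G i).1).det : Subring.center R) : R) *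
            ((((T₀.submatrix (fun i => (G i).2) id).det : Subring.center R) : R) *
              (List.ofFn fun i => Bf i (G i).1 (G i).2).prod) := by
    intro G
    rw [factor_sum]
    rw [show (∑ α : Equiv.Perm (Fin n), (Equiv.Perm.sign α : ℤ) •
        (List.ofFn fun i => S (α i) (G i).1).prod)
      = (((S₀.submatrix id fun i => (G i).1).det : Subring.center R) : R) from
      hdS S₀ fun i => (G i).1]
    rw [show (∑ β : Equiv.Perm (Fin n), (Equiv.Perm.sign β : ℤ) •
        (List.ofFn fun i => T ((G i).2) (β i)).prod)
      = (((T₀.submatrix (fun i => (G i).2) id).det : Subring.center R) : R) from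
      hdT T₀ fun i => (G i).2]
  simp only [hfac]
  -- split G into (p, q)
  refine (Fintype.sum_equiv (Equiv.arrowProdEquivProdArrow (Fin n) (fun _ => Fin n) (fun _ => Fin n))
      (fun G => (((S₀.submatrix id fun i => (G i).1).det : Subring.center R) : R) *
        ((((T₀.submatrix (fun i => (G i).2) id).det : Subring.center R) : R) *
          (List.ofFn fun i => Bf i (G i).1 (G i).2).prod))
      (fun pq => (((S₀.submatrix id pq.1).det : Subring.center R) : R) *
        ((((T₀.submatrix pq.2 id).det : Subring.center R) : R) *
          (List.ofFn fun i => Bf i (pq.1 i) (pq.2 i)).prod))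
      (fun G => rfl)).trans ?_
  rw [Fintype.sum_prod_type]
  -- restrict p to permutations
  refine (sum_fun_perm _ (fun p hp => ?_)).trans ?_
  · obtain ⟨a, b, hab, hne⟩ := Function.not_injective_iff.mp hp
    have h0 : (S₀.submatrix id p).det = 0 :=
      Matrix.det_zero_of_column_eq hne fun k => by
        simp [Matrix.submatrix_apply, hab]
    simp [h0]
  -- restrict q to permutations
  have hq : ∀ σ : Equiv.Perm (Fin n),
      (∑ q : Fin n → Fin n,
        (((S₀.submatrix id ⇑σ).det : Subring.center R) : R) *
          ((((T₀.submatrix q id).det : Subring.center R) : R) *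
            (List.ofFn fun i => Bf i (σ i) (q i)).prod))
      = ∑ τ : Equiv.Perm (Fin n),
        (((S₀.submatrix id ⇑σ).det : Subring.center R) : R) *
          ((((T₀.submatrix ⇑τ id).det : Subring.center R) : R) *
            (List.ofFn fun i => Bf i (σ i) (τ i)).prod) := by
    intro σ
    refine sum_fun_perm _ fun q hq => ?_
    obtain ⟨a, b, hab, hne⟩ := Function.not_injective_iff.mp hq
    have h0 : (T₀.submatrix q id).det = 0 :=
      Matrix.det_zero_of_row_eq hne (by funext k; simp [Matrix.submatrix_apply, hab])
    simp [h0]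
  simp only [hq]
  -- identify permuted determinants
  have hdetS : ∀ σ : Equiv.Perm (Fin n),
      (((S₀.submatrix id ⇑σ).det : Subring.center R) : R)
        = (Equiv.Perm.sign σ : ℤ) • ((S₀.det : Subring.center R) : R) := by
    intro σ
    rw [Matrix.det_permute']
    push_cast [zsmul_eq_mul]
    rfl
  have hdetT : ∀ τ : Equiv.Perm (Fin n),
      (((T₀.submatrix ⇑τ id).det : Subring.center R) : R)
        = (Equiv.Perm.sign τ : ℤ) • ((T₀.det : Subring.center R) : R) := by
    intro τ
    rw [Matrix.det_permute]
    push_cast [zsmul_eq_mul]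
    rfl
  simp only [hdetS, hdetT, Finset.mul_sum, MulMemClass.coe_mul, mul_assoc, smul_mul_assoc,
    mul_smul_comm, smul_smul]
  refine Finset.sum_congr rfl fun σ _ => Finset.sum_congr rfl fun τ _ => ?_
  rw [mul_comm ((Equiv.Perm.sign τ : ℤ)) ((Equiv.Perm.sign σ : ℤ))]

lemma central_entries_of_inv {n : ℕ} (T S : Matrix (Fin n) (Fin n) R)
    (hT : ∀ i j, T i j ∈ Set.center R)
    (hST : S * T = 1) (hTS : T * S = 1) :
    ∀ i j, S i j ∈ Set.center R := by
  intro i j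
  rw [Semigroup.mem_center_iff]
  intro g
  set D : Matrix (Fin n) (Fin n) R := Matrix.diagonal (fun _ => g) with hD
  have hDT : D * T = T * D := by
    ext a b
    rw [Matrix.diagonal_mul, Matrix.mul_diagonal]
    exact (ccomm (hT a b) g).symm
  have key : S * D = D * S := by
    calc S * D = S * D * (T * S) := by rw [hTS, mul_one]
      _ = S * (D * T) * S := by rw [← mul_assoc, mul_assoc S D T]
      _ = S * T * (D * S) := by rw [hDT]; simp only [mul_assoc]
      _ = D * S := by rw [hST, one_mul]
  have h1 : (S * D) i j = S i j * g := by rw [Matrix.mul_diagonal]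
  have h2 : (D * S) i j = g * S i j := by rw [Matrix.diagonal_mul]
  rw [← h1, ← h2, key]

end PreadjAux

theorem preadj_conj {R : Type*} [Ring R] {n : ℕ}
    (A T S : Matrix (Fin n) (Fin n) R)
    (hT : ∀ i j, T i j ∈ Set.center R)
    (hST : S * T = 1) (hTS : T * S = 1) :
    preadj (S * A * T) = S * preadj A * T := by
  ext r s
  obtain _ | m := n
  · exact r.elim0
  have hS : ∀ i j, S i j ∈ Set.center R :=
    PreadjAux.central_entries_of_inv T S hT hST hTS
  set Z := Subring.center R with hZ
  set S₀ : Matrix (Fin (m+1)) (Fin (m+1)) Z := fun i j => ⟨S i j, hS i j⟩ with hS₀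
  set T₀ : Matrix (Fin (m+1)) (Fin (m+1)) Z := fun i j => ⟨T i j, hT i j⟩ with hT₀
  have hSmap : S₀.map Z.subtype = S := by ext i j; rfl
  have hTmap : T₀.map Z.subtype = T := by ext i j; rfl
  have hST₀ : S₀ * T₀ = 1 := by
    ext i j
    have h2 : (S * T) i j = (1 : Matrix (Fin (m+1)) (Fin (m+1)) R) i j := by rw [hST]
    rw [Matrix.mul_apply, Matrix.one_apply] at h2
    rw [Matrix.mul_apply, Matrix.one_apply]
    rw [AddSubmonoidClass.coe_finset_sum]
    simp only [MulMemClass.coe_mul]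
    rw [h2]
    by_cases h : i = j <;> simp [h]
  have hdet1 : ((S₀.det * T₀.det : Z) : R) = 1 := by
    rw [← Matrix.det_mul, hST₀, Matrix.det_one, OneMemClass.coe_one]
  -- the elementary matrix E at (s, r)
  set E : Matrix (Fin (m+1)) (Fin (m+1)) R :=
    (fun u v => if u = s then if v = r then (1 : R) else 0 else 0) with hE
  have hEc : ∀ u v, E u v ∈ Set.center R := by
    intro u v
    by_cases h1 : u = s
    · by_cases h2 : v = r
      · simp only [hE, if_pos h1, if_pos h2]; exact Set.one_mem_center
      · simp only [hE, if_pos h1, if_neg h2]; exact Set.zero_mem_center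
    · simp only [hE, if_neg h1]; exact Set.zero_mem_center
  -- M' = T * E * S has entries T u s * S r v
  have hM'app : ∀ u v, (T * E * S) u v = T u s * S r v := by
    intro u v
    have hTE : ∀ u k, (T * E) u k = if k = r then T u s else 0 := by
      intro u k
      rw [Matrix.mul_apply]
      by_cases h2 : k = r
      · rw [if_pos h2]
        rw [Finset.sum_eq_single s]
        · simp [hE, h2]
        · intro b _ hb; simp [hE, hb]
        · intro hs; exact absurd (Finset.mem_univ s) hs
      · rw [if_neg h2]
        refine Finset.sum_eq_zero fun k' _ => ?_
        by_cases h3 : k' = s <;> simp [hE, h3, h2]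
    rw [Matrix.mul_apply]
    rw [Finset.sum_eq_single r]
    · rw [hTE, if_pos rfl]
    · intro b _ hb; rw [hTE, if_neg hb, zero_mul]
    · intro hr; exact absurd (Finset.mem_univ r) hr
  have hM'c : ∀ u v, (T * E * S) u v ∈ Set.center R := by
    intro u v
    rw [hM'app u v]
    exact Set.mul_mem_center (hT u s) (hS r v)
  -- step 8 : pointwise matrix family identity
  have hfam : (fun i : Fin (m+1) => if i = (0 : Fin (m+1)) then E else S * A * T)
      = fun i => S * (if i = (0 : Fin (m+1)) then T * E * S else A) * T := by
    funext i
    by_cases h : i = 0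
    · rw [if_pos h, if_pos h]
      rw [show S * (T * E * S) * T = (S * T) * E * (S * T) by
        simp only [Matrix.mul_assoc]]
      rw [hST, Matrix.one_mul, Matrix.mul_one]
    · rw [if_neg h, if_neg h]
  -- main computation
  have step1 : preadj (S * A * T) r s
      = ∑ u, ∑ v, E u v * preadj (S * A * T) v u := by
    have hrow : ∀ u, ∑ v, E u v * preadj (S * A * T) v u
        = if u = s then preadj (S * A * T) r u else 0 := by
      intro u
      by_cases h : u = s
      · simp [hE, h, ite_mul, Finset.sum_ite_eq']
      · simp [hE, h]
    rw [Finset.sum_congr rfl fun u _ => hrow u]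
    simp [Finset.sum_ite_eq']
  have step2 := PreadjAux.lemmaD (0 : Fin (m+1)) (S * A * T) E hEc
  have step3 := PreadjAux.lemmaD (0 : Fin (m+1)) A (T * E * S) hM'c
  have step4 : PreadjAux.sdetAux (fun i : Fin (m+1) => if i = 0 then E else S * A * T)
      = PreadjAux.sdetAux (fun i : Fin (m+1) => if i = 0 then T * E * S else A) := by
    rw [hfam]
    have := PreadjAux.lemmaCB S₀ T₀ (fun i : Fin (m+1) => if i = 0 then T * E * S else A)
    rw [hSmap, hTmap] at this
    rw [this, hdet1, one_mul]
  have step5 : ∑ u, ∑ v, (T * E * S) u v * preadj A v u = (S * preadj A * T) r s := by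
    have hout : (S * preadj A * T) r s = ∑ u, (S * preadj A) r u * T u s := by
      rw [Matrix.mul_apply]
    rw [hout]
    refine Finset.sum_congr rfl fun u _ => ?_
    rw [Matrix.mul_apply, Finset.sum_mul]
    refine Finset.sum_congr rfl fun v _ => ?_
    rw [hM'app u v, mul_assoc, PreadjAux.ccomm (hT u s) (S r v * preadj A v u)]
  rw [step1, ← step2, step4, step3, step5]
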